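/- The language L = {0ⁿ1ⁿ : n ∈ ℕ} over Σ = {0,1} is not regular with advice: for every advice string A (over any finite advice alphabet) and every automaton with advice A, the accepted language differs from L. -/

import Mathlib

/-- The run of an automaton with advice. -/
def advRun {Q S Γ : Type*} (δ : Q → Γ → S → Q) (A : ℕ → Γ) : Q → ℕ → List S → Q
  | q, _, [] => q
  | q, n, a :: w => advRun δ A (δ q (A n) a) (n + 1) w

/-- The language accepted by an automaton with advice. -/
def advAccepts {Q S Γ : Type*} (δ : Q → Γ → S → Q) (A : ℕ → Γ) (q0 : Q) (F : Set Q) :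
    Set (List S) :=
  {w | advRun δ A q0 0 w ∈ F}

/-- The language `{0ⁿ1ⁿ : n ∈ ℕ}` over `{0,1}`, with `0 = false` and `1 = true`. -/
def zeroNoneN : Set (List Bool) :=
  {w | ∃ n : ℕ, w = List.replicate n false ++ List.replicate n true}

lemma advRun_append {Q S Γ : Type*} (δ : Q → Γ → S → Q) (A : ℕ → Γ)
    (u : List S) : ∀ (q : Q) (n : ℕ) (v : List S),
    advRun δ A q n (u ++ v) = advRun δ A (advRun δ A q n u) (n + u.length) v := by
  induction u with
  | nil => intro q n v; simp [advRun]
  | cons a u ih =>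
      intro q n v
      have e : n + 1 + u.length = n + (u.length + 1) := by omega
      show advRun δ A (δ q (A n) a) (n + 1) (u ++ v) = _
      rw [ih, e, List.length_cons]
      rfl

lemma mem_zeroNoneN (a b : ℕ) :
    (List.replicate a false ++ List.replicate b true) ∈ zeroNoneN ↔ a = b := by
  constructor
  · rintro ⟨n, hn⟩
    have ht := congrArg (List.count true) hn
    have hf := congrArg (List.count false) hn
    simp [List.count_append, List.count_replicate] at ht hf
    omega
  · rintro rfl; exact ⟨a, rfl⟩

/-- `{0ⁿ1ⁿ : n ∈ ℕ}` is not regular with advice: no automaton with any advice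
string over any finite advice alphabet accepts it. -/
theorem zeroN_oneN_not_regular_with_advice :
    ∀ (Γ : Type) [Fintype Γ] (A : ℕ → Γ) (Q : Type) [Fintype Q]
      (δ : Q → Γ → Bool → Q) (q0 : Q) (F : Set Q),
      advAccepts δ A q0 F ≠ zeroNoneN := by
  intro Γ _ A Q _ δ q0 F h
  set k := Fintype.card Q with hk
  set u : Fin (k + 1) → List Bool :=
    fun i => List.replicate (k + i) false ++ List.replicate (k - i) true with hu
  have hlen : ∀ i : Fin (k + 1), (u i).length = 2 * k := by
    intro i
    have : (i : ℕ) ≤ k := Nat.lt_succ_iff.mp i.isLt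
    simp [hu]; omega
  have hninj : ¬ Function.Injective (fun i => advRun δ A q0 0 (u i)) :=
    fun hinj => by
      have := Fintype.card_le_of_injective _ hinj
      simp at this
      omega
  rw [Function.not_injective_iff] at hninj
  obtain ⟨i, j, hij, hne⟩ := hninj
  -- acceptance of (u i ++ v) and (u j ++ v) agree for any v
  have key : ∀ v : List Bool,
      ((u i ++ v) ∈ advAccepts δ A q0 F ↔ (u j ++ v) ∈ advAccepts δ A q0 F) := by
    intro v
    simp only [advAccepts, Set.mem_setOf_eq, advRun_append, hlen, hij]
  have hi : (i : ℕ) ≤ k := Nat.lt_succ_iff.mp i.isLt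
  have hj : (j : ℕ) ≤ k := Nat.lt_succ_iff.mp j.isLt
  have key2 := key (List.replicate (2 * i) true)
  rw [h] at key2
  have e1 : u i ++ List.replicate (2 * (i:ℕ)) true
      = List.replicate (k + i) false ++ List.replicate (k + i) true := by
    have h2 : (k - (i:ℕ)) + 2 * (i:ℕ) = k + i := by omega
    rw [hu]
    simp only [List.append_assoc, ← List.replicate_add, h2]
  have e2 : u j ++ List.replicate (2 * (i:ℕ)) true
      = List.replicate (k + j) false ++ List.replicate (k - j + 2 * i) true := by
    simp [hu, List.append_assoc, ← List.replicate_add]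
  rw [e1, e2, mem_zeroNoneN, mem_zeroNoneN] at key2
  have : (i : ℕ) = j := by omega
  exact hne (Fin.ext this)
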